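/- Let μ be a finitely supported generating probability measure on I. Then the support of the harmonic measure ν_ε is the whole of ∂I; equivalently, ν_ε(U) > 0 for every nonempty open subset U ⊆ ∂I. -/

import Mathlib

open Filter Topology MeasureTheory

/-- Words in the free monoid on two letters `α = true`, `β = false`. -/
abbrev Word := List Bool

/-- Conjugation: reverse the word and swap the two letters. -/
def wconj (x : Word) : Word := x.reverse.map (fun b => !b)

/-- Fusion multiplicity `m(z; x, y)`: the number of triples `(x₀, w, y₀)` with
`x = x₀w`, `y = w̄y₀` and `z = x₀y₀`. -/
def fm (x y z : Word) : ℕ :=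
  ((Finset.range (x.length + 1)).filter (fun k =>
    wconj (x.drop k) <+: y ∧ z = x.take k ++ y.drop (x.length - k))).card

/-- Maximal alternating blocks of a word. -/
def blocks : Word → List Word
  | [] => []
  | a :: rest =>
    match blocks rest with
    | [] => [[a]]
    | b :: bs => if b.head? = some a then [a] :: b :: bs else (a :: b) :: bs

/-- The quantum integer `[n]_q = (qⁿ - q⁻ⁿ)/(q - q⁻¹)`. -/
noncomputable def qnum (q : ℝ) (n : ℕ) : ℝ := (q ^ n - q⁻¹ ^ n) / (q - q⁻¹)

/-- Quantum dimension `dim_q(x) = ∏ᵢ [|xᵢ|+1]_q` over the maximal alternating blocks. -/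
noncomputable def dimq (q : ℝ) (x : Word) : ℝ :=
  ((blocks x).map (fun b => qnum q (b.length + 1))).prod

/-- Classical dimension `dim₁(x) = ∏ᵢ (|xᵢ|+1)` over the maximal alternating blocks. -/
def dim1 (x : Word) : ℕ := ((blocks x).map (fun b => b.length + 1)).prod
/-- The transition kernel of the random walk on `I` associated with a probability
measure `μ`: `p(x,y) = Σ_z μ(z)·m(z; x̄, y)·dim_q(y)/(dim_q(x)·dim_q(z))`. -/
noncomputable def pker (q : ℝ) (μ : Word → ℝ) (x y : Word) : ℝ :=
  ∑ᶠ z : Word, μ z * (fm (wconj x) y z : ℝ) * dimq q y / (dimq q x * dimq q z)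

/-- The `n`-step transition probabilities: `p₁ = p` and
`p_{n+1}(x,y) = Σ_u p_n(x,u)·p(u,y)`.  (The value at `n = 0` is irrelevant.) -/
noncomputable def pn (q : ℝ) (μ : Word → ℝ) : ℕ → Word → Word → ℝ
  | 0, _, _ => 0
  | 1, x, y => pker q μ x y
  | n + 2, x, y => ∑' u : Word, pn q μ (n + 1) x u * pker q μ u y
/-- The word `[w]_n` formed by the first `n` letters of an infinite word `w ∈ ∂I`. -/
def bprefix (w : ℕ → Bool) (n : ℕ) : Word := (List.range n).map w

/-- `D_w(x, y) = lim_n dim_q(x[w]_n)/dim_q(y[w]_n)` for `x, y ∈ I` and `w ∈ ∂I`. -/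
noncomputable def Dw (q : ℝ) (x y : Word) (w : ℕ → Bool) : ℝ :=
  limUnder atTop (fun n => dimq q (x ++ bprefix w n) / dimq q (y ++ bprefix w n))

/-- Concatenation of a finite word with an infinite word. -/
def bcat (z : Word) (u : ℕ → Bool) : ℕ → Bool :=
  fun n => if n < z.length then z.getD n false else u (n - z.length)

/-- The strictly alternating infinite word starting with the letter `a`. -/
def walt (a : Bool) : ℕ → Bool := fun n => if n % 2 = 0 then a else !a

/-- `(x|w)`: the length of the longest common prefix of a finite word `x` and an
infinite word `w`. -/
def cpb : Word → (ℕ → Bool) → ℕ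
  | [], _ => 0
  | a :: xs, w => if a = w 0 then cpb xs (fun n => w (n + 1)) + 1 else 0
/-- Discrete σ-algebra on the countable set of words. -/
instance : MeasurableSpace Word := ⊤

lemma qden_neg {q : ℝ} (hq0 : 0 < q) (hq1 : q < 1) : q - q⁻¹ < 0 := by
  have : 1 < q⁻¹ := (one_lt_inv₀ hq0).2 hq1
  linarith

lemma qnum_pos {q : ℝ} (hq0 : 0 < q) (hq1 : q < 1) {n : ℕ} (hn : 1 ≤ n) : 0 < qnum q n := by
  have h1 : 1 < q⁻¹ := (one_lt_inv₀ hq0).2 hq1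
  have hnum : q ^ n - q⁻¹ ^ n < 0 := by
    have h2 : q ^ n ≤ 1 := pow_le_one₀ hq0.le hq1.le
    have h3 : 1 < q⁻¹ ^ n := one_lt_pow₀ h1 (by omega)
    linarith
  exact div_pos_of_neg_of_neg hnum (qden_neg hq0 hq1)

lemma qnum_one {q : ℝ} (hq0 : 0 < q) (hq1 : q < 1) : qnum q 1 = 1 := by
  have h := qden_neg hq0 hq1
  simp only [qnum, pow_one]
  exact div_self h.ne

noncomputable def rlo (q : ℝ) : ℝ := q⁻¹ * (1 - q^2)
noncomputable def rhi (q : ℝ) : ℝ := q⁻¹ * (1 - q^2)⁻¹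

lemma one_sub_sq_pos {q : ℝ} (hq0 : 0 < q) (hq1 : q < 1) : 0 < 1 - q^2 := by nlinarith

lemma rlo_pos {q : ℝ} (hq0 : 0 < q) (hq1 : q < 1) : 0 < rlo q :=
  mul_pos (inv_pos.2 hq0) (one_sub_sq_pos hq0 hq1)

lemma rhi_pos {q : ℝ} (hq0 : 0 < q) (hq1 : q < 1) : 0 < rhi q :=
  mul_pos (inv_pos.2 hq0) (inv_pos.2 (one_sub_sq_pos hq0 hq1))

lemma rlo_le_rhi {q : ℝ} (hq0 : 0 < q) (hq1 : q < 1) : rlo q ≤ rhi q := by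
  have h := one_sub_sq_pos hq0 hq1
  have h2 : (1 - q^2) ≤ (1 - q^2)⁻¹ := by
    have h3 : (1 - q^2) * (1 - q^2) ≤ 1 := by nlinarith
    have := inv_pos.2 h
    nlinarith [mul_inv_cancel₀ h.ne']
  exact mul_le_mul_of_nonneg_left h2 (inv_pos.2 hq0).le

lemma qnum_ratio_lo {q : ℝ} (hq0 : 0 < q) (hq1 : q < 1) {n : ℕ} (hn : 1 ≤ n) :
    rlo q * qnum q n ≤ qnum q (n+1) := by
  have hd := qden_neg hq0 hq1
  have hqne : q ≠ 0 := hq0.ne'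
  have hXpos : 0 < q ^ n := pow_pos hq0 n
  have hYpos : 0 < q⁻¹ ^ n := pow_pos (inv_pos.2 hq0) n
  have hXle : q ^ n ≤ 1 := pow_le_one₀ hq0.le hq1.le
  have hYge : 1 ≤ q⁻¹ ^ n := one_le_pow₀ ((one_le_inv₀ hq0).2 hq1.le)
  have hXY : q ^ n * q⁻¹ ^ n = 1 := by rw [← mul_pow, mul_inv_cancel₀ hqne, one_pow]
  unfold qnum
  rw [mul_div_assoc' (rlo q), div_le_div_right_of_neg hd]
  have key : q ^ 2 * q ^ n - q⁻¹ ^ n ≤ (1 - q ^ 2) * (q ^ n - q⁻¹ ^ n) := by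
    have hq21 : q ^ 2 ≤ 1 := by nlinarith
    have f1 : q ^ 2 * q ^ n ≤ q ^ n := by nlinarith
    have f2 : q ^ 2 * q ^ n ≤ q ^ 2 * q⁻¹ ^ n := by nlinarith [sq_nonneg q]
    nlinarith
  have e2 : q * (q ^ (n + 1) - q⁻¹ ^ (n + 1)) = q ^ 2 * q ^ n - q⁻¹ ^ n := by
    rw [pow_succ, pow_succ]; field_simp
  have e3 : q * (rlo q * (q ^ n - q⁻¹ ^ n)) = (1 - q ^ 2) * (q ^ n - q⁻¹ ^ n) := by
    rw [rlo]; field_simp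
  exact le_of_mul_le_mul_left (by rw [e2, e3]; exact key) hq0

lemma qnum_ratio_hi {q : ℝ} (hq0 : 0 < q) (hq1 : q < 1) {n : ℕ} (hn : 1 ≤ n) :
    qnum q (n+1) ≤ rhi q * qnum q n := by
  have hd := qden_neg hq0 hq1
  have hqne : q ≠ 0 := hq0.ne'
  have hs := one_sub_sq_pos hq0 hq1
  have hXpos : 0 < q ^ n := pow_pos hq0 n
  have hYpos : 0 < q⁻¹ ^ n := pow_pos (inv_pos.2 hq0) n
  have hXq : q ^ n ≤ q := by
    calc q ^ n ≤ q ^ 1 := pow_le_pow_of_le_one hq0.le hq1.le hn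
    _ = q := pow_one q
  have hXY : q ^ n * q⁻¹ ^ n = 1 := by rw [← mul_pow, mul_inv_cancel₀ hqne, one_pow]
  unfold qnum
  rw [mul_div_assoc' (rhi q), div_le_div_right_of_neg hd]
  have key : q ^ n - q⁻¹ ^ n ≤ (1 - q ^ 2) * (q ^ 2 * q ^ n - q⁻¹ ^ n) := by
    have h1 : q ^ n * q ^ n ≤ q ^ 2 := by nlinarith
    have h7 : (0:ℝ) < 1 - q ^ 2 + q ^ 4 := by nlinarith [sq_nonneg (q^2 - 1), sq_nonneg q, pow_pos hq0 4]
    have h2 : q ^ n * q ^ n * (1 - q ^ 2 + q ^ 4) ≤ q ^ 2 * (1 - q ^ 2 + q ^ 4) := by nlinarith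
    have h3 : q ^ 2 * (1 - q ^ 2 + q ^ 4) ≤ q ^ 2 := by nlinarith [pow_pos hq0 2, pow_pos hq0 4]
    have h4 : q ^ n * q ^ n * (1 - q ^ 2 + q ^ 4) ≤ q ^ 2 := le_trans h2 h3
    have h5 : q ^ n * q ^ n * (1 - q ^ 2 + q ^ 4) * q⁻¹ ^ n ≤ q ^ 2 * q⁻¹ ^ n := by nlinarith
    have h6 : q ^ n * q ^ n * (1 - q ^ 2 + q ^ 4) * q⁻¹ ^ n = q ^ n * (1 - q ^ 2 + q ^ 4) := by
      calc q ^ n * q ^ n * (1 - q ^ 2 + q ^ 4) * q⁻¹ ^ n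
          = (q ^ n * q⁻¹ ^ n) * (q ^ n * (1 - q ^ 2 + q ^ 4)) := by ring
        _ = q ^ n * (1 - q ^ 2 + q ^ 4) := by rw [hXY, one_mul]
    nlinarith
  have c : 0 < q * (1 - q ^ 2) := mul_pos hq0 hs
  have e2 : q * (1 - q ^ 2) * (rhi q * (q ^ n - q⁻¹ ^ n)) = q ^ n - q⁻¹ ^ n := by
    rw [rhi]; field_simp
  have e3 : q * (1 - q ^ 2) * (q ^ (n + 1) - q⁻¹ ^ (n + 1)) = (1 - q ^ 2) * (q ^ 2 * q ^ n - q⁻¹ ^ n) := by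
    rw [pow_succ, pow_succ]; linear_combination (-(1 - q ^ 2) * q⁻¹ ^ n) * mul_inv_cancel₀ hqne
  exact le_of_mul_le_mul_left (by rw [e2, e3]; exact key) c

lemma dimq_pos {q : ℝ} (hq0 : 0 < q) (hq1 : q < 1) (w : Word) : 0 < dimq q w := by
  unfold dimq
  apply List.prod_pos
  intro a ha
  simp only [List.mem_map] at ha
  obtain ⟨b, _, rfl⟩ := ha
  exact qnum_pos hq0 hq1 (by omega)

lemma blocks_eq_nil {w : Word} : blocks w = [] ↔ w = [] := by
  cases w with
  | nil => simp [blocks]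
  | cons a rest =>
    simp only [blocks]
    constructor
    · intro h
      cases hb : blocks rest with
      | nil => simp [hb] at h
      | cons b bs => rw [hb] at h; by_cases hc : b.head? = some a <;> simp [hc] at h
    · intro h; exact absurd h (List.cons_ne_nil a rest)

lemma dimq_nil {q : ℝ} : dimq q [] = 1 := by simp [dimq, blocks]

lemma blocks_cons (a : Bool) (w : Word) {b : Word} {bs : List Word} (hb : blocks w = b :: bs) :
    blocks (a :: w) = if b.head? = some a then [a] :: b :: bs else (a :: b) :: bs := by
  rw [blocks, hb]

lemma dimq_cons_bounds {q : ℝ} (hq0 : 0 < q) (hq1 : q < 1) (a : Bool) (w : Word) :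
    rlo q * dimq q w ≤ dimq q (a :: w) ∧ dimq q (a :: w) ≤ rhi q * dimq q w := by
  have h1 := qnum_one hq0 hq1
  have hrlo2 : rlo q * 1 ≤ qnum q 2 := by
    have := qnum_ratio_lo hq0 hq1 (le_refl 1); rwa [h1] at this
  have hrhi2 : qnum q 2 ≤ rhi q * 1 := by
    have := qnum_ratio_hi hq0 hq1 (le_refl 1); rwa [h1] at this
  rw [mul_one] at hrlo2 hrhi2
  cases hb : blocks w with
  | nil =>
    have hw : w = [] := blocks_eq_nil.1 hb
    subst hw
    have hd : dimq q (a :: ([] : Word)) = qnum q 2 := by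
      simp [dimq, blocks]
    rw [hd, dimq_nil, mul_one, mul_one]
    exact ⟨hrlo2, hrhi2⟩
  | cons b bs =>
    set rest := (bs.map (fun c => qnum q (c.length + 1))).prod with hrest_def
    have hdw : dimq q w = qnum q (b.length + 1) * rest := by
      unfold dimq; rw [hb]; simp [hrest_def]
    have hrest : 0 < rest := by
      apply List.prod_pos; intro t ht
      simp only [List.mem_map] at ht; obtain ⟨c, _, rfl⟩ := ht
      exact qnum_pos hq0 hq1 (by omega)
    have hqb : 0 < qnum q (b.length + 1) := qnum_pos hq0 hq1 (by omega)
    by_cases hc : b.head? = some a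
    · have hd : dimq q (a :: w) = qnum q 2 * dimq q w := by
        unfold dimq
        rw [blocks_cons a w hb, if_pos hc, hb]
        simp only [List.map_cons, List.prod_cons, List.length_cons, List.length_nil]
      rw [hd]
      have hdwpos : 0 < dimq q w := dimq_pos hq0 hq1 w
      constructor
      · exact mul_le_mul_of_nonneg_right hrlo2 hdwpos.le
      · exact mul_le_mul_of_nonneg_right hrhi2 hdwpos.le
    · have hd : dimq q (a :: w) = qnum q (b.length + 1 + 1) * rest := by
        unfold dimq
        rw [blocks_cons a w hb, if_neg hc]
        simp [hrest_def]
      rw [hd, hdw]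
      constructor
      · calc rlo q * (qnum q (b.length + 1) * rest)
            = (rlo q * qnum q (b.length + 1)) * rest := by ring
          _ ≤ qnum q (b.length + 1 + 1) * rest :=
            mul_le_mul_of_nonneg_right (qnum_ratio_lo hq0 hq1 (by omega)) hrest.le
      · calc qnum q (b.length + 1 + 1) * rest
            ≤ (rhi q * qnum q (b.length + 1)) * rest :=
            mul_le_mul_of_nonneg_right (qnum_ratio_hi hq0 hq1 (by omega)) hrest.le
          _ = rhi q * (qnum q (b.length + 1) * rest) := by ring

lemma dimq_append_lo {q : ℝ} (hq0 : 0 < q) (hq1 : q < 1) (a s : Word) :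
    rlo q ^ a.length * dimq q s ≤ dimq q (a ++ s) := by
  induction a with
  | nil => simp
  | cons c a ih =>
    have hb := dimq_cons_bounds hq0 hq1 c (a ++ s)
    calc rlo q ^ (c :: a).length * dimq q s
        = rlo q * (rlo q ^ a.length * dimq q s) := by
          simp [List.length_cons, pow_succ]; ring
      _ ≤ rlo q * dimq q (a ++ s) :=
          mul_le_mul_of_nonneg_left ih (rlo_pos hq0 hq1).le
      _ ≤ dimq q (c :: (a ++ s)) := hb.1

lemma dimq_append_hi {q : ℝ} (hq0 : 0 < q) (hq1 : q < 1) (a s : Word) :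
    dimq q (a ++ s) ≤ rhi q ^ a.length * dimq q s := by
  induction a with
  | nil => simp
  | cons c a ih =>
    have hb := dimq_cons_bounds hq0 hq1 c (a ++ s)
    calc dimq q (c :: (a ++ s)) ≤ rhi q * dimq q (a ++ s) := hb.2
      _ ≤ rhi q * (rhi q ^ a.length * dimq q s) :=
          mul_le_mul_of_nonneg_left ih (rhi_pos hq0 hq1).le
      _ = rhi q ^ (c :: a).length * dimq q s := by
          simp [List.length_cons, pow_succ]; ring

lemma wconj_append (a b : Word) : wconj (a ++ b) = wconj b ++ wconj a := by
  simp [wconj]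

lemma wconj_wconj (x : Word) : wconj (wconj x) = x := by
  simp [wconj, List.map_reverse, List.map_map]
  simp [Function.comp_def]

lemma wconj_length (x : Word) : (wconj x).length = x.length := by simp [wconj]

lemma fm_cond_iff (x t s Z : Word) (k : ℕ) (hkt : k ≤ t.length) :
    (wconj ((wconj t ++ wconj x).drop k) <+: x ++ s ∧
      Z = (wconj t ++ wconj x).take k ++ (x ++ s).drop (t.length + x.length - k))
    ↔ (wconj ((wconj t).drop k) <+: s ∧ Z = (wconj t).take k ++ s.drop (t.length - k)) := by
  have hwt : (wconj t).length = t.length := wconj_length t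
  have hdrop : (wconj t ++ wconj x).drop k = (wconj t).drop k ++ wconj x := by
    rw [List.drop_append]
    have h0 : k - (wconj t).length = 0 := by omega
    rw [h0, List.drop_zero]
  have htake : (wconj t ++ wconj x).take k = (wconj t).take k := by
    rw [List.take_append]
    have h0 : k - (wconj t).length = 0 := by omega
    rw [h0, List.take_zero, List.append_nil]
  have hdrop2 : (x ++ s).drop (t.length + x.length - k) = s.drop (t.length - k) := by
    rw [List.drop_append]
    have h1 : x.drop (t.length + x.length - k) = [] := by
      apply List.drop_eq_nil_of_le; omega
    have h2 : t.length + x.length - k - x.length = t.length - k := by omega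
    rw [h1, h2, List.nil_append]
  have hpre : wconj ((wconj t ++ wconj x).drop k) = x ++ wconj ((wconj t).drop k) := by
    rw [hdrop, wconj_append, wconj_wconj]
  rw [hpre, htake, hdrop2, List.prefix_append_right_inj]

lemma fm_shift {x z t s Z : Word} (hlen : x.length = z.length) (hZ : Z.length ≤ t.length) :
    fm (wconj (x ++ t)) (x ++ s) Z = fm (wconj (z ++ t)) (z ++ s) Z := by
  unfold fm
  rw [wconj_append x t, wconj_append z t]
  have hlt : (wconj t ++ wconj x).length = t.length + x.length := by
    simp [wconj_length, List.length_append]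
  have hlz : (wconj t ++ wconj z).length = t.length + z.length := by
    simp [wconj_length, List.length_append]
  rw [hlt, hlz, hlen]
  congr 1
  apply Finset.filter_congr
  intro k hk
  simp only [Finset.mem_range] at hk
  show _ ↔ _
  by_cases hkt : k ≤ t.length
  · rw [show t.length + z.length = t.length + x.length by omega] at *
    constructor
    · intro h
      have h2 := (fm_cond_iff x t s Z k hkt).1 (by rwa [show t.length + x.length = t.length + x.length from rfl])
      rw [show t.length + x.length = t.length + z.length by omega]
      exact (fm_cond_iff z t s Z k hkt).2 h2
    · intro h
      rw [show t.length + x.length = t.length + z.length by omega] at h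
      have h2 := (fm_cond_iff z t s Z k hkt).1 h
      exact (fm_cond_iff x t s Z k hkt).2 h2
  · constructor
    · rintro ⟨-, h2⟩
      exfalso
      have : Z.length ≥ k := by
        rw [h2]
        rw [List.length_append, List.length_take]
        have : (wconj t ++ wconj x).length = t.length + x.length := hlt
        omega
      omega
    · rintro ⟨-, h2⟩
      exfalso
      have : Z.length ≥ k := by
        rw [h2]
        rw [List.length_append, List.length_take]
        have : (wconj t ++ wconj z).length = t.length + z.length := hlz
        omega
      omega


noncomputable def Phi (q : ℝ) (μ : Word → ℝ) (u v : Word) : ℝ :=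
  ∑ᶠ z : Word, μ z * (fm (wconj u) v z : ℝ) / dimq q z

lemma pker_eq_phi {q : ℝ} (μ : Word → ℝ) (hfin : {z : Word | μ z ≠ 0}.Finite) (u v : Word) :
    pker q μ u v = Phi q μ u v * (dimq q v / dimq q u) := by
  unfold pker Phi
  rw [finsum_mul]
  exact finsum_congr fun z => by ring

lemma pker_nonneg {q : ℝ} (hq0 : 0 < q) (hq1 : q < 1) (μ : Word → ℝ) (hμ0 : ∀ z, 0 ≤ μ z)
    (u v : Word) : 0 ≤ pker q μ u v := by
  apply finsum_nonneg
  intro z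
  have h1 := dimq_pos hq0 hq1 v
  have h2 := dimq_pos hq0 hq1 u
  have h3 := dimq_pos hq0 hq1 z
  have h4 := hμ0 z
  positivity

lemma Phi_nonneg {q : ℝ} (hq0 : 0 < q) (hq1 : q < 1) (μ : Word → ℝ) (hμ0 : ∀ z, 0 ≤ μ z)
    (u v : Word) : 0 ≤ Phi q μ u v := by
  apply finsum_nonneg
  intro z
  have h3 := dimq_pos hq0 hq1 z
  have h4 := hμ0 z
  positivity

lemma Phi_shift {q : ℝ} (μ : Word → ℝ) {x z t : Word} (s : Word)
    (hlen : x.length = z.length) (hsupp : ∀ z', μ z' ≠ 0 → z'.length ≤ t.length) :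
    Phi q μ (x ++ t) (x ++ s) = Phi q μ (z ++ t) (z ++ s) := by
  unfold Phi
  apply finsum_congr
  intro Z
  by_cases hμ : μ Z = 0
  · simp [hμ]
  · rw [fm_shift hlen (hsupp Z hμ)]

lemma prod_shift {q : ℝ} (hq0 : 0 < q) (hq1 : q < 1) (μ : Word → ℝ)
    (hfin : {z : Word | μ z ≠ 0}.Finite)
    {x z : Word} (hlen : x.length = z.length)
    (p : ℕ → Word) (N : ℕ) (hsupp : ∀ i < N, ∀ z', μ z' ≠ 0 → z'.length ≤ (p i).length) :
    (∏ i ∈ Finset.range N, pker q μ (x ++ p i) (x ++ p (i+1))) * dimq q (x ++ p 0) * dimq q (z ++ p N)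
    = (∏ i ∈ Finset.range N, pker q μ (z ++ p i) (z ++ p (i+1))) * dimq q (z ++ p 0) * dimq q (x ++ p N) := by
  induction N with
  | zero => simp; ring
  | succ n ih =>
    have ih' := ih (fun i hi => hsupp i (by omega))
    rw [Finset.prod_range_succ, Finset.prod_range_succ]
    rw [pker_eq_phi μ hfin (x ++ p n) (x ++ p (n+1)), pker_eq_phi μ hfin (z ++ p n) (z ++ p (n+1))]
    rw [Phi_shift μ (p (n+1)) hlen (hsupp n (by omega))]
    have hdx : dimq q (x ++ p n) ≠ 0 := (dimq_pos hq0 hq1 _).ne'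
    have hdz : dimq q (z ++ p n) ≠ 0 := (dimq_pos hq0 hq1 _).ne'
    field_simp
    linear_combination (Phi q μ (z ++ p n) (z ++ p (n+1)) * dimq q (x ++ p (n+1)) * dimq q (z ++ p (n+1))) * ih'

section MeasureMachinery

/-- cylinder sets in path space -/
def cylSet (N : ℕ) (p : ℕ → Word) : Set (ℕ → Word) := {ω | ∀ i ≤ N, ω i = p i}

def shiftk (N : ℕ) : (ℕ → Word) → (ℕ → Word) := fun ω i => ω (N + i)

lemma measurable_shiftk (N : ℕ) : Measurable (shiftk N) :=
  measurable_pi_lambda _ fun i => measurable_pi_apply (N + i)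

lemma measurableSet_word (s : Set Word) : MeasurableSet s := trivial

lemma measurableSet_cylSet (N : ℕ) (p : ℕ → Word) : MeasurableSet (cylSet N p) := by
  have h : cylSet N p = ⋂ i ∈ Set.Iic N, (fun ω : ℕ → Word => ω i) ⁻¹' {p i} := by
    ext ω; simp [cylSet]
  rw [h]
  exact MeasurableSet.biInter (Set.to_countable _) fun i _ =>
    (measurable_pi_apply i) (measurableSet_word _)

def cylFam : Set (Set (ℕ → Word)) := {s | ∃ N p, s = cylSet N p}

lemma isPiSystem_cylFam : IsPiSystem cylFam := by
  rintro s ⟨N, p, rfl⟩ t ⟨M, r, rfl⟩ hne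
  obtain ⟨ω, hω1, hω2⟩ := hne
  rcases le_total N M with h | h
  · refine ⟨M, r, ?_⟩
    have hpr : ∀ i ≤ N, p i = r i := fun i hi => by
      rw [← hω1 i hi, hω2 i (le_trans hi h)]
    ext ω'
    constructor
    · rintro ⟨_, h2⟩; exact h2
    · intro h2
      exact ⟨fun i hi => by rw [h2 i (le_trans hi h), ← hpr i hi], h2⟩
  · refine ⟨N, p, ?_⟩
    have hpr : ∀ i ≤ M, p i = r i := fun i hi => by
      rw [← hω1 i (le_trans hi h), hω2 i hi]
    ext ω'
    constructor
    · rintro ⟨h1, _⟩; exact h1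
    · intro h1
      exact ⟨h1, fun i hi => by rw [h1 i (le_trans hi h), hpr i hi]⟩

lemma generateFrom_cylFam :
    MeasurableSpace.generateFrom cylFam = (inferInstance : MeasurableSpace (ℕ → Word)) := by
  apply le_antisymm
  · exact MeasurableSpace.generateFrom_le (by rintro t ⟨N, p, rfl⟩; exact measurableSet_cylSet N p)
  · have heval : ∀ i : ℕ, ∀ s : Set Word,
        MeasurableSet[MeasurableSpace.generateFrom cylFam] ((fun ω : ℕ → Word => ω i) ⁻¹' s) := by
      intro i s
      have hsingle : ∀ z : Word,
          MeasurableSet[MeasurableSpace.generateFrom cylFam] ((fun ω : ℕ → Word => ω i) ⁻¹' {z}) := by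
        intro z
        have h : (fun ω : ℕ → Word => ω i) ⁻¹' {z} =
            ⋃ v : Fin i → Word, cylSet i (fun j => if h : j < i then v ⟨j, h⟩ else z) := by
          ext ω
          simp only [Set.mem_preimage, Set.mem_singleton_iff, Set.mem_iUnion]
          constructor
          · intro hz
            refine ⟨fun j => ω j.1, fun j hj => ?_⟩
            by_cases hji : j < i
            · simp [cylSet, hji]
            · have : j = i := by omega
              subst this; simp [hji, hz]
          · rintro ⟨v, hv⟩
            have := hv i le_rfl
            simpa using this
        rw [h]
        exact MeasurableSet.iUnion fun v =>
          MeasurableSpace.measurableSet_generateFrom ⟨i, _, rfl⟩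
      have hs : (fun ω : ℕ → Word => ω i) ⁻¹' s = ⋃ z ∈ s, (fun ω : ℕ → Word => ω i) ⁻¹' {z} := by
        ext ω; simp
      rw [hs]
      exact MeasurableSet.biUnion (s.to_countable) fun z _ => hsingle z
    have : (inferInstance : MeasurableSpace (ℕ → Word)) =
        ⨆ i : ℕ, MeasurableSpace.comap (fun ω : ℕ → Word => ω i) ⊤ := rfl
    rw [this]
    refine iSup_le fun i => ?_
    rintro t ⟨s, -, rfl⟩
    exact heval i s

end MeasureMachinery

section Markov

variable {q : ℝ} {μ : Word → ℝ}

lemma prob_zero_ne_start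
    (P : Word → Measure (ℕ → Word)) (hP : ∀ x, IsProbabilityMeasure (P x))
    (hmarkov : ∀ (x : Word) (w : ℕ → Word), w 0 = x → ∀ n : ℕ,
      P x {ω | ∀ i ≤ n, ω i = w i} =
        ENNReal.ofReal (∏ i ∈ Finset.range n, pker q μ (w i) (w (i + 1))))
    (u : Word) : P u {ω | ω 0 ≠ u} = 0 := by
  have h1 : P u {ω | ∀ i ≤ 0, ω i = u} = 1 := by
    rw [hmarkov u (fun _ => u) rfl 0]
    simp
  have h2 : {ω : ℕ → Word | ∀ i ≤ 0, ω i = u} = {ω | ω 0 = u} := by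
    ext ω; simp [Nat.le_zero]
  rw [h2] at h1
  have hms : MeasurableSet {ω : ℕ → Word | ω 0 = u} := by
    have he : {ω : ℕ → Word | ω 0 = u} = (fun ω : ℕ → Word => ω 0) ⁻¹' {u} := rfl
    rw [he]; exact (measurable_pi_apply 0) (measurableSet_word _)
  have := hP u
  have h3 : {ω : ℕ → Word | ω 0 ≠ u} = {ω : ℕ → Word | ω 0 = u}ᶜ := rfl
  rw [h3, measure_compl hms (measure_ne_top _ _), h1, measure_univ, tsub_self]

lemma markov_lemma
    (P : Word → Measure (ℕ → Word)) (hP : ∀ x, IsProbabilityMeasure (P x))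
    (hmarkov : ∀ (x : Word) (w : ℕ → Word), w 0 = x → ∀ n : ℕ,
      P x {ω | ∀ i ≤ n, ω i = w i} =
        ENNReal.ofReal (∏ i ∈ Finset.range n, pker q μ (w i) (w (i + 1))))
    (hknn : ∀ u v : Word, 0 ≤ pker q μ u v)
    (u : Word) (N : ℕ) (p : ℕ → Word) (hp : p 0 = u)
    (G : Set (ℕ → Word)) (hG : MeasurableSet G) :
    P u (cylSet N p ∩ shiftk N ⁻¹' G)
      = ENNReal.ofReal (∏ i ∈ Finset.range N, pker q μ (p i) (p (i + 1))) * P (p N) G := by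
  haveI := hP u
  haveI := hP (p N)
  have hmarkovC : ∀ (x : Word) (w : ℕ → Word), w 0 = x → ∀ n : ℕ,
      P x (cylSet n w) =
        ENNReal.ofReal (∏ i ∈ Finset.range n, pker q μ (w i) (w (i + 1))) := hmarkov
  set c := ENNReal.ofReal (∏ i ∈ Finset.range N, pker q μ (p i) (p (i + 1))) with hcdef
  let μ1 : Measure (ℕ → Word) := Measure.map (shiftk N) ((P u).restrict (cylSet N p))
  let μ2 : Measure (ℕ → Word) := c • P (p N)
  have hμ1G : ∀ A : Set (ℕ → Word), MeasurableSet A →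
      μ1 A = P u (cylSet N p ∩ shiftk N ⁻¹' A) := by
    intro A hA
    show (Measure.map (shiftk N) ((P u).restrict (cylSet N p))) A = _
    rw [Measure.map_apply (measurable_shiftk N) hA,
      Measure.restrict_apply (hA.preimage (measurable_shiftk N)), Set.inter_comm]
  haveI hfin1 : IsFiniteMeasure μ1 := by
    constructor
    rw [hμ1G Set.univ MeasurableSet.univ]
    exact lt_of_le_of_lt (measure_mono (Set.subset_univ _)) (by simp [measure_univ])
  have hcylval : P u (cylSet N p) = c := by
    rw [hcdef]
    exact hmarkovC u p hp N
  have key : μ1 = μ2 := by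
    apply MeasureTheory.ext_of_generate_finite cylFam generateFrom_cylFam.symm isPiSystem_cylFam
    · rintro s ⟨k, r, rfl⟩
      rw [hμ1G _ (measurableSet_cylSet k r)]
      have hμ2 : μ2 (cylSet k r) = c * P (p N) (cylSet k r) := rfl
      by_cases h0 : r 0 = p N
      · set pstar : ℕ → Word := fun i => if i ≤ N then p i else r (i - N) with hpstar
        have hcomb : cylSet N p ∩ shiftk N ⁻¹' cylSet k r = cylSet (N + k) pstar := by
          ext ω
          simp only [cylSet, Set.mem_inter_iff, Set.mem_setOf_eq, Set.mem_preimage, shiftk]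
          constructor
          · rintro ⟨h1, h2⟩ i hi
            by_cases hiN : i ≤ N
            · simp [hpstar, hiN, h1 i hiN]
            · have : i - N ≤ k := by omega
              have := h2 (i - N) this
              rw [show N + (i - N) = i by omega] at this
              simp [hpstar, hiN, this]
          · intro h
            constructor
            · intro i hi
              have := h i (by omega)
              simpa [hpstar, hi] using this
            · intro j hj
              have hthis := h (N + j) (by omega)
              rw [hthis]
              by_cases hj0 : j = 0
              · subst hj0
                have hNN : N + 0 = N := rfl
                rw [hNN]
                simp [hpstar, h0]
              · have hNj : ¬ (N + j ≤ N) := by omega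
                simp [hpstar, hNj, Nat.add_sub_cancel_left]
        rw [hcomb]
        have hpstar0 : pstar 0 = u := by simp [hpstar, hp]
        rw [hmarkovC u pstar hpstar0 (N + k), hμ2, hmarkovC (p N) r h0 k, hcdef]
        rw [Finset.prod_range_add]
        rw [ENNReal.ofReal_mul (Finset.prod_nonneg fun i _ => hknn _ _)]
        congr 1
        · congr 1
          apply Finset.prod_congr rfl
          intro i hi
          simp only [Finset.mem_range] at hi
          have e1 : pstar i = p i := by simp [hpstar, show i ≤ N by omega]
          have e2 : pstar (i + 1) = p (i + 1) := by simp [hpstar, show i + 1 ≤ N by omega]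
          rw [e1, e2]
        · congr 1
          apply Finset.prod_congr rfl
          intro j hj
          simp only [Finset.mem_range] at hj
          have e1 : pstar (N + j) = r j := by
            by_cases hj0 : j = 0
            · subst hj0; simp [hpstar, h0]
            · have : ¬ (N + j ≤ N) := by omega
              simp [hpstar, this, Nat.add_sub_cancel_left]
          have e2 : pstar (N + j + 1) = r (j + 1) := by
            have h1 : ¬ (N + j + 1 ≤ N) := by omega
            have h2 : N + j + 1 - N = j + 1 := by omega
            simp [hpstar, h1, h2]
          rw [e1, e2]
      · have h1 : cylSet N p ∩ shiftk N ⁻¹' cylSet k r = ∅ := by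
          ext ω
          simp only [cylSet, Set.mem_inter_iff, Set.mem_setOf_eq, Set.mem_preimage, shiftk,
            Set.mem_empty_iff_false, iff_false, not_and]
          intro h1 h2
          apply h0
          have ha := h2 0 (Nat.zero_le k)
          rw [Nat.add_zero] at ha
          rw [← ha, h1 N le_rfl]
        rw [h1, measure_empty, hμ2]
        have hsub : cylSet k r ⊆ {ω : ℕ → Word | ω 0 ≠ p N} := by
          intro ω hω
          have h0' := hω 0 (Nat.zero_le k)
          simp only [Set.mem_setOf_eq, h0']
          exact h0
        have : P (p N) (cylSet k r) = 0 :=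
          le_antisymm (le_trans (measure_mono hsub)
            (le_of_eq (prob_zero_ne_start P hP hmarkov (p N)))) zero_le
        rw [this, mul_zero]
    · rw [hμ1G Set.univ MeasurableSet.univ]
      simp only [Set.preimage_univ, Set.inter_univ]
      rw [hcylval]
      have : μ2 Set.univ = c * P (p N) Set.univ := rfl
      rw [this, measure_univ, mul_one]
  rw [← hμ1G G hG, key]
  rfl

end Markov

section PathExtraction

lemma pn_nonneg {q : ℝ} (hq0 : 0 < q) (hq1 : q < 1) (μ : Word → ℝ) (hμ0 : ∀ z, 0 ≤ μ z) :
    ∀ (n : ℕ) (x y : Word), 0 ≤ pn q μ n x y := by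
  intro n
  induction n with
  | zero => intro x y; simp [pn]
  | succ k ih =>
    intro x y
    cases k with
    | zero => exact pker_nonneg hq0 hq1 μ hμ0 x y
    | succ j =>
      show 0 ≤ ∑' u : Word, pn q μ (j + 1) x u * pker q μ u y
      exact tsum_nonneg fun u => mul_nonneg (ih x u) (pker_nonneg hq0 hq1 μ hμ0 u y)

lemma pn_path {q : ℝ} (hq0 : 0 < q) (hq1 : q < 1) (μ : Word → ℝ) (hμ0 : ∀ z, 0 ≤ μ z) :
    ∀ (n : ℕ), 1 ≤ n → ∀ a b : Word, 0 < pn q μ n a b →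
      ∃ p : ℕ → Word, p 0 = a ∧ p n = b ∧
        0 < ∏ i ∈ Finset.range n, pker q μ (p i) (p (i + 1)) := by
  intro n
  induction n with
  | zero => omega
  | succ k ih =>
    intro _ a b hpos
    cases k with
    | zero =>
      refine ⟨fun i => if i = 0 then a else b, by simp, by simp, ?_⟩
      have : pn q μ 1 a b = pker q μ a b := rfl
      rw [this] at hpos
      simpa using hpos
    | succ j =>
      have hrw : pn q μ (j + 2) a b = ∑' u : Word, pn q μ (j + 1) a u * pker q μ u b := rfl
      rw [hrw] at hpos
      have hex : ∃ u : Word, 0 < pn q μ (j + 1) a u * pker q μ u b := by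
        by_contra hcon
        push_neg at hcon
        have hz : ∀ u : Word, pn q μ (j + 1) a u * pker q μ u b = 0 := fun u =>
          le_antisymm (hcon u) (mul_nonneg (pn_nonneg hq0 hq1 μ hμ0 _ _ _)
            (pker_nonneg hq0 hq1 μ hμ0 _ _))
        rw [tsum_congr hz, tsum_zero] at hpos
        exact lt_irrefl 0 hpos
      obtain ⟨u, hu⟩ := hex
      have hpn1 : 0 < pn q μ (j + 1) a u := by
        rcases (mul_pos_iff.1 hu) with ⟨h1, _⟩ | ⟨h1, h2⟩
        · exact h1
        · exact absurd h2 (not_lt.2 (pker_nonneg hq0 hq1 μ hμ0 _ _))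
      have hpk : 0 < pker q μ u b := by
        rcases (mul_pos_iff.1 hu) with ⟨_, h2⟩ | ⟨h1, _⟩
        · exact h2
        · exact absurd h1 (not_lt.2 (pn_nonneg hq0 hq1 μ hμ0 _ _ _))
      obtain ⟨p, hp0, hpj, hprod⟩ := ih (by omega) a u hpn1
      refine ⟨fun i => if i ≤ j + 1 then p i else b, by simp [hp0], by simp, ?_⟩
      rw [Finset.prod_range_succ]
      have he : ∀ i ∈ Finset.range (j + 1),
          pker q μ (if i ≤ j + 1 then p i else b) (if i + 1 ≤ j + 1 then p (i + 1) else b)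
            = pker q μ (p i) (p (i + 1)) := by
        intro i hi
        simp only [Finset.mem_range] at hi
        rw [if_pos (by omega : i ≤ j + 1), if_pos (by omega : i + 1 ≤ j + 1)]
      rw [Finset.prod_congr rfl he]
      show 0 < (∏ i ∈ Finset.range (j + 1), pker q μ (p i) (p (i + 1))) *
        pker q μ (if j + 1 ≤ j + 1 then p (j + 1) else b)
          (if j + 1 + 1 ≤ j + 1 then p (j + 1 + 1) else b)
      have e1 : (if j + 1 ≤ j + 1 then p (j + 1) else b) = u := by rw [if_pos le_rfl, hpj]
      have e2 : (if j + 1 + 1 ≤ j + 1 then p (j + 1 + 1) else b) = b := by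
        rw [if_neg (by omega)]
      rw [e1, e2]
      exact mul_pos hprod hpk

end PathExtraction

lemma path_bound {q : ℝ} (hq0 : 0 < q) (hq1 : q < 1) (μ : Word → ℝ) (hμ0 : ∀ z, 0 ≤ μ z)
    (hfin : {z : Word | μ z ≠ 0}.Finite)
    {x z : Word} (hlen : x.length = z.length)
    (p : ℕ → Word) (N : ℕ) (hsupp : ∀ i < N, ∀ z', μ z' ≠ 0 → z'.length ≤ (p i).length) :
    (rlo q ^ x.length / rhi q ^ x.length) ^ 2 * (∏ i ∈ Finset.range N, pker q μ (z ++ p i) (z ++ p (i+1)))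
      ≤ ∏ i ∈ Finset.range N, pker q μ (x ++ p i) (x ++ p (i+1)) := by
  set m := x.length with hm
  set c₁ := (rlo q ^ m / rhi q ^ m) ^ 2 with hc₁
  set A := ∏ i ∈ Finset.range N, pker q μ (x ++ p i) (x ++ p (i+1)) with hA
  set B := ∏ i ∈ Finset.range N, pker q μ (z ++ p i) (z ++ p (i+1)) with hB
  have hkey := prod_shift hq0 hq1 μ hfin hlen p N hsupp
  have hrlo := rlo_pos hq0 hq1
  have hrhi := rhi_pos hq0 hq1
  have hd0 := dimq_pos hq0 hq1 (p 0)
  have hdN := dimq_pos hq0 hq1 (p N)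
  have hxp0 := dimq_pos hq0 hq1 (x ++ p 0)
  have hzp0 := dimq_pos hq0 hq1 (z ++ p 0)
  have hxpN := dimq_pos hq0 hq1 (x ++ p N)
  have hzpN := dimq_pos hq0 hq1 (z ++ p N)
  have r1 : rlo q ^ m * dimq q (p 0) ≤ dimq q (z ++ p 0) := by
    have := dimq_append_lo hq0 hq1 z (p 0); rwa [← hlen] at this
  have r2 : dimq q (x ++ p 0) ≤ rhi q ^ m * dimq q (p 0) := dimq_append_hi hq0 hq1 x (p 0)
  have r3 : rlo q ^ m * dimq q (p N) ≤ dimq q (x ++ p N) := dimq_append_lo hq0 hq1 x (p N)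
  have r4 : dimq q (z ++ p N) ≤ rhi q ^ m * dimq q (p N) := by
    have := dimq_append_hi hq0 hq1 z (p N); rwa [← hlen] at this
  have hc₁pos : 0 < c₁ := by positivity
  have step1 : c₁ * (dimq q (x ++ p 0) * dimq q (z ++ p N))
      ≤ dimq q (z ++ p 0) * dimq q (x ++ p N) := by
    have h1 : dimq q (x ++ p 0) * dimq q (z ++ p N)
        ≤ (rhi q ^ m * dimq q (p 0)) * (rhi q ^ m * dimq q (p N)) :=
      mul_le_mul r2 r4 hzpN.le (by positivity)
    have h2 : c₁ * ((rhi q ^ m * dimq q (p 0)) * (rhi q ^ m * dimq q (p N)))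
        = (rlo q ^ m * dimq q (p 0)) * (rlo q ^ m * dimq q (p N)) := by
      rw [hc₁]
      field_simp
    have h3 : (rlo q ^ m * dimq q (p 0)) * (rlo q ^ m * dimq q (p N))
        ≤ dimq q (z ++ p 0) * dimq q (x ++ p N) :=
      mul_le_mul r1 r3 (by positivity) hzp0.le
    calc c₁ * (dimq q (x ++ p 0) * dimq q (z ++ p N))
        ≤ c₁ * ((rhi q ^ m * dimq q (p 0)) * (rhi q ^ m * dimq q (p N))) :=
          mul_le_mul_of_nonneg_left h1 hc₁pos.le
      _ = _ := h2
      _ ≤ _ := h3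
  have hBnn : 0 ≤ B := Finset.prod_nonneg fun i _ => pker_nonneg hq0 hq1 μ hμ0 _ _
  have hX : 0 < dimq q (x ++ p 0) * dimq q (z ++ p N) := by positivity
  apply le_of_mul_le_mul_right _ hX
  calc c₁ * B * (dimq q (x ++ p 0) * dimq q (z ++ p N))
      = B * (c₁ * (dimq q (x ++ p 0) * dimq q (z ++ p N))) := by ring
    _ ≤ B * (dimq q (z ++ p 0) * dimq q (x ++ p N)) :=
        mul_le_mul_of_nonneg_left step1 hBnn
    _ = B * dimq q (z ++ p 0) * dimq q (x ++ p N) := by ring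
    _ = A * dimq q (x ++ p 0) * dimq q (z ++ p N) := hkey.symm
    _ = A * (dimq q (x ++ p 0) * dimq q (z ++ p N)) := by ring

/-- finite path skeletons -/
def pw (u : Word) (N : ℕ) (v : Fin N → Word) : ℕ → Word :=
  fun i => if h : 1 ≤ i ∧ i ≤ N then v ⟨i - 1, by omega⟩ else u

lemma pw_zero (u : Word) (N : ℕ) (v : Fin N → Word) : pw u N v 0 = u := by simp [pw]

def Sset (m K : ℕ) (z : Word) : Set Word := {v | v.take m = z ∧ K < v.length}
def Gset (m K : ℕ) (z : Word) : Set (ℕ → Word) := {ω | ∀ n, ω n ∈ Sset m K z}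
def staySet (m K : ℕ) (z : Word) (N : ℕ) : Set (ℕ → Word) := {ω | ∀ n ≤ N, ω n ∈ Sset m K z}

lemma measurableSet_Gset (m K : ℕ) (z : Word) : MeasurableSet (Gset m K z) := by
  have h : Gset m K z = ⋂ n, (fun ω : ℕ → Word => ω n) ⁻¹' (Sset m K z) := by
    ext ω; simp [Gset]
  rw [h]
  exact MeasurableSet.iInter fun n => (measurable_pi_apply n) (measurableSet_word _)

lemma measurableSet_staySet (m K : ℕ) (z : Word) (N : ℕ) :
    MeasurableSet (staySet m K z N) := by
  have h : staySet m K z N = ⋂ n ∈ Set.Iic N, (fun ω : ℕ → Word => ω n) ⁻¹' (Sset m K z) := by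
    ext ω; simp [staySet]
  rw [h]
  exact MeasurableSet.biInter (Set.to_countable _) fun n _ =>
    (measurable_pi_apply n) (measurableSet_word _)

lemma Gset_eq_iInter (m K : ℕ) (z : Word) : Gset m K z = ⋂ N, staySet m K z N := by
  ext ω
  simp only [Gset, staySet, Set.mem_setOf_eq, Set.mem_iInter]
  constructor
  · intro h N n _; exact h n
  · intro h n; exact h n n le_rfl

lemma staySet_antitone (m K : ℕ) (z : Word) : Antitone (staySet m K z) :=
  fun N M hNM ω hω n hn => hω n (le_trans hn hNM)

lemma stay_bound {q : ℝ} (hq0 : 0 < q) (hq1 : q < 1) (μ : Word → ℝ) (hμ0 : ∀ z, 0 ≤ μ z)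
    (hfin : {z : Word | μ z ≠ 0}.Finite) {L : ℕ} (hL : ∀ z', μ z' ≠ 0 → z'.length ≤ L)
    (P : Word → Measure (ℕ → Word)) (hP : ∀ x, IsProbabilityMeasure (P x))
    (hmarkov : ∀ (x : Word) (w : ℕ → Word), w 0 = x → ∀ n : ℕ,
      P x {ω | ∀ i ≤ n, ω i = w i} =
        ENNReal.ofReal (∏ i ∈ Finset.range n, pker q μ (w i) (w (i + 1))))
    {m : ℕ} (x z₀ t : Word) (hxlen : x.length = m) (hz₀len : z₀.length = m)
    (htL : L < t.length) (N : ℕ) :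
    ENNReal.ofReal ((rlo q ^ m / rhi q ^ m) ^ 2) * P (z₀ ++ t) (Gset m (m + L) z₀)
      ≤ P (x ++ t) (staySet m (m + L) x N) := by
  classical
  haveI := hP (z₀ ++ t)
  have hmarkovC : ∀ (y : Word) (w : ℕ → Word), w 0 = y → ∀ n : ℕ,
      P y (cylSet n w) =
        ENNReal.ofReal (∏ i ∈ Finset.range n, pker q μ (w i) (w (i + 1))) := hmarkov
  set K := m + L with hK
  set u₀ := z₀ ++ t with hu₀
  set xt := x ++ t with hxt
  have hdropz : u₀.drop m = t := by rw [hu₀, ← hz₀len]; exact List.drop_left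
  have hdropx : xt.drop m = t := by rw [hxt, ← hxlen]; exact List.drop_left
  set cond : (Fin N → Word) → Prop := fun v => ∀ i ≤ N, pw u₀ N v i ∈ Sset m K z₀ with hcond
  set vmap : (Fin N → Word) → (Fin N → Word) := fun v i => x ++ (v i).drop m with hvmap
  set tl : (Fin N → Word) → ℕ → Word := fun v i => (pw u₀ N v i).drop m with htl
  -- pointwise path identifications
  have hzside : ∀ v, cond v → ∀ i, pw u₀ N v i = z₀ ++ tl v i := by
    intro v hv i
    show pw u₀ N v i = z₀ ++ (pw u₀ N v i).drop m
    by_cases hi : 1 ≤ i ∧ i ≤ N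
    · have htk : (pw u₀ N v i).take m = z₀ := (hv i hi.2).1
      conv_lhs => rw [← List.take_append_drop m (pw u₀ N v i)]
      rw [htk]
    · have hpw : pw u₀ N v i = u₀ := dif_neg hi
      rw [hpw, hdropz]
  have hxside : ∀ v, cond v → ∀ i, pw xt N (vmap v) i = x ++ tl v i := by
    intro v hv i
    show pw xt N (vmap v) i = x ++ (pw u₀ N v i).drop m
    by_cases hi : 1 ≤ i ∧ i ≤ N
    · have hpw : pw xt N (vmap v) i = vmap v ⟨i - 1, by omega⟩ := dif_pos hi
      have hpwz : pw u₀ N v i = v ⟨i - 1, by omega⟩ := dif_pos hi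
      rw [hpw, hpwz]
    · have hpw : pw xt N (vmap v) i = xt := dif_neg hi
      have hpwz : pw u₀ N v i = u₀ := dif_neg hi
      rw [hpw, hpwz, hdropz]
  -- length facts
  have hu₀len : u₀.length = m + t.length := by
    rw [hu₀, List.length_append, hz₀len]
  have hlenS : ∀ v, cond v → ∀ i, L ≤ (tl v i).length := by
    intro v hv i
    show L ≤ ((pw u₀ N v i).drop m).length
    rw [List.length_drop]
    by_cases hi : 1 ≤ i ∧ i ≤ N
    · have h2 : K < (pw u₀ N v i).length := (hv i hi.2).2
      omega
    · have hpwz : pw u₀ N v i = u₀ := dif_neg hi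
      rw [hpwz]
      omega
  have hSx : ∀ v, cond v → ∀ i, pw xt N (vmap v) i ∈ Sset m K x := by
    intro v hv i
    rw [hxside v hv i]
    refine ⟨?_, ?_⟩
    · show (x ++ tl v i).take m = x
      rw [← hxlen]
      exact List.take_left
    · show K < (x ++ tl v i).length
      rw [List.length_append, hxlen]
      have he : (tl v i).length = (pw u₀ N v i).length - m := by
        show ((pw u₀ N v i).drop m).length = _
        rw [List.length_drop]
      rw [he]
      by_cases hi : 1 ≤ i ∧ i ≤ N
      · have h2 : K < (pw u₀ N v i).length := (hv i hi.2).2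
        omega
      · have hpwz : pw u₀ N v i = u₀ := dif_neg hi
        rw [hpwz]
        omega
  -- sets
  set Fz : (Fin N → Word) → Set (ℕ → Word) :=
    fun v => if cond v then cylSet N (pw u₀ N v) else ∅ with hFz
  set Fx : (Fin N → Word) → Set (ℕ → Word) :=
    fun v => if cond v then cylSet N (pw xt N (vmap v)) else ∅ with hFx
  -- step 1 : P u₀ G ≤ ∑' v, P u₀ (Fz v)
  have step1 : P u₀ (Gset m K z₀) ≤ ∑' v : Fin N → Word, P u₀ (Fz v) := by
    have hsub : Gset m K z₀ ⊆ (⋃ v : Fin N → Word, Fz v) ∪ {ω : ℕ → Word | ω 0 ≠ u₀} := by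
      intro ω hω
      by_cases h0 : ω 0 = u₀
      · left
        refine Set.mem_iUnion.2 ⟨fun i => ω (i.1 + 1), ?_⟩
        have hpweq : ∀ i ≤ N, pw u₀ N (fun i : Fin N => ω (i.1 + 1)) i = ω i := by
          intro i hi
          by_cases hi1 : 1 ≤ i ∧ i ≤ N
          · have h2 : pw u₀ N (fun j : Fin N => ω (j.1 + 1)) i = ω (i - 1 + 1) := dif_pos hi1
            rw [h2]
            congr 1
            omega
          · have h2 : pw u₀ N (fun j : Fin N => ω (j.1 + 1)) i = u₀ := dif_neg hi1
            have hi0 : i = 0 := by omega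
            rw [h2, hi0, h0]
        have hcondv : cond (fun i : Fin N => ω (i.1 + 1)) := by
          intro i hi
          rw [hpweq i hi]
          exact hω i
        simp only [hFz, if_pos hcondv]
        intro i hi
        exact (hpweq i hi).symm
      · right; exact h0
    calc P u₀ (Gset m K z₀) ≤ P u₀ ((⋃ v : Fin N → Word, Fz v) ∪ {ω : ℕ → Word | ω 0 ≠ u₀}) :=
          measure_mono hsub
      _ ≤ P u₀ (⋃ v : Fin N → Word, Fz v) + P u₀ {ω : ℕ → Word | ω 0 ≠ u₀} := measure_union_le _ _
      _ = P u₀ (⋃ v : Fin N → Word, Fz v) := by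
          rw [prob_zero_ne_start P hP hmarkov u₀, add_zero]
      _ ≤ ∑' v : Fin N → Word, P u₀ (Fz v) := measure_iUnion_le _
  -- step 2 : termwise bound
  have step2 : ∀ v : Fin N → Word,
      ENNReal.ofReal ((rlo q ^ m / rhi q ^ m) ^ 2) * P u₀ (Fz v) ≤ P xt (Fx v) := by
    intro v
    by_cases hv : cond v
    · simp only [hFz, hFx, if_pos hv]
      rw [hmarkovC u₀ (pw u₀ N v) (pw_zero _ _ _) N,
        hmarkovC xt (pw xt N (vmap v)) (pw_zero _ _ _) N]
      rw [← ENNReal.ofReal_mul (by positivity)]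
      apply ENNReal.ofReal_le_ofReal
      have hAz : ∏ i ∈ Finset.range N, pker q μ (pw u₀ N v i) (pw u₀ N v (i + 1))
          = ∏ i ∈ Finset.range N, pker q μ (z₀ ++ tl v i) (z₀ ++ tl v (i + 1)) :=
        Finset.prod_congr rfl fun i _ => by rw [hzside v hv i, hzside v hv (i + 1)]
      have hAx : ∏ i ∈ Finset.range N, pker q μ (pw xt N (vmap v) i) (pw xt N (vmap v) (i + 1))
          = ∏ i ∈ Finset.range N, pker q μ (x ++ tl v i) (x ++ tl v (i + 1)) :=
        Finset.prod_congr rfl fun i _ => by rw [hxside v hv i, hxside v hv (i + 1)]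
      rw [hAz, hAx]
      have := path_bound hq0 hq1 μ hμ0 hfin
        (show x.length = z₀.length by rw [hxlen, hz₀len]) (tl v) N
        (fun i _ z' hz' => le_trans (hL z' hz') (hlenS v hv i))
      rwa [hxlen] at this
    · simp only [hFz, hFx, if_neg hv, measure_empty, mul_zero]
      exact le_refl _
  -- step 3 : disjointness of Fx and union inside staySet
  have hFxdisj : Pairwise (Function.onFun Disjoint Fx) := by
    intro v v' hvv'
    by_cases hv : cond v
    · by_cases hv' : cond v'
      · simp only [Function.onFun, hFx, if_pos hv, if_pos hv']
        obtain ⟨j, hj⟩ : ∃ j : Fin N, v j ≠ v' j := by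
          by_contra hc
          push_neg at hc
          exact hvv' (funext hc)
        apply Set.disjoint_left.2
        intro ω hω1 hω2
        have hj1 : 1 ≤ (j.1 + 1) ∧ (j.1 + 1) ≤ N := by omega
        have e1 : ω (j.1 + 1) = vmap v ⟨j.1 + 1 - 1, by omega⟩ := by
          rw [hω1 (j.1 + 1) hj1.2]; exact dif_pos hj1
        have e2 : ω (j.1 + 1) = vmap v' ⟨j.1 + 1 - 1, by omega⟩ := by
          rw [hω2 (j.1 + 1) hj1.2]; exact dif_pos hj1
        have hje : (⟨j.1 + 1 - 1, by omega⟩ : Fin N) = j := by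
          apply Fin.ext; simp
        rw [hje] at e1 e2
        have heq : x ++ (v j).drop m = x ++ (v' j).drop m := by
          rw [hvmap] at e1 e2
          simp only at e1 e2
          rw [← e1, ← e2]
        have hdropeq : (v j).drop m = (v' j).drop m := by
          have := List.append_cancel_left heq
          exact this
        -- recover v j = v' j
        have hpwj : pw u₀ N v (j.1 + 1) = v ⟨j.1 + 1 - 1, by omega⟩ := dif_pos hj1
        have hpwj' : pw u₀ N v' (j.1 + 1) = v' ⟨j.1 + 1 - 1, by omega⟩ := dif_pos hj1
        have htkv : (v j).take m = z₀ := by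
          have h1 := (hv (j.1 + 1) hj1.2).1
          rwa [hpwj, hje] at h1
        have htkv' : (v' j).take m = z₀ := by
          have h1 := (hv' (j.1 + 1) hj1.2).1
          rwa [hpwj', hje] at h1
        apply hj
        calc v j = (v j).take m ++ (v j).drop m := (List.take_append_drop m (v j)).symm
          _ = (v' j).take m ++ (v' j).drop m := by rw [htkv, htkv', hdropeq]
          _ = v' j := List.take_append_drop m (v' j)
      · simp only [Function.onFun, hFx, if_neg hv']
        exact Set.disjoint_empty _
    · simp only [Function.onFun, hFx, if_neg hv]
      exact Set.empty_disjoint _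
  have hFxmeas : ∀ v, MeasurableSet (Fx v) := by
    intro v
    by_cases hv : cond v
    · simp only [hFx, if_pos hv]; exact measurableSet_cylSet _ _
    · simp only [hFx, if_neg hv]; exact MeasurableSet.empty
  have hFxsub : (⋃ v : Fin N → Word, Fx v) ⊆ staySet m K x N := by
    intro ω hω
    obtain ⟨v, hv⟩ := Set.mem_iUnion.1 hω
    simp only [hFx] at hv
    by_cases hc : cond v
    · rw [if_pos hc] at hv
      intro n hn
      rw [hv n hn]
      exact hSx v hc n
    · rw [if_neg hc] at hv
      exact absurd hv (Set.notMem_empty ω)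
  have step3 : ∑' v : Fin N → Word, P xt (Fx v) ≤ P xt (staySet m K x N) := by
    rw [← measure_iUnion hFxdisj hFxmeas]
    exact measure_mono hFxsub
  -- assemble
  calc ENNReal.ofReal ((rlo q ^ m / rhi q ^ m) ^ 2) * P u₀ (Gset m K z₀)
      ≤ ENNReal.ofReal ((rlo q ^ m / rhi q ^ m) ^ 2) * ∑' v : Fin N → Word, P u₀ (Fz v) :=
        mul_le_mul_right step1 _
    _ = ∑' v : Fin N → Word, ENNReal.ofReal ((rlo q ^ m / rhi q ^ m) ^ 2) * P u₀ (Fz v) :=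
        ENNReal.tsum_mul_left.symm
    _ ≤ ∑' v : Fin N → Word, P xt (Fx v) := ENNReal.tsum_le_tsum step2
    _ ≤ P xt (staySet m K x N) := step3


lemma bprefix_eq_imp {f g : ℕ → Bool} {m : ℕ} (h : bprefix f m = bprefix g m) :
    ∀ i < m, f i = g i := by
  intro i hi
  have hlf : i < (bprefix f m).length := by simp [bprefix]; omega
  have hlg : i < (bprefix g m).length := by simp [bprefix]; omega
  have h1 : (bprefix f m)[i]'hlf = (bprefix g m)[i]'hlg := List.getElem_of_eq h hlf
  simpa [bprefix] using h1

/-- the support of the harmonic measure `ν_ε` is the whole of `∂I`: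
`ν_ε(U) > 0` for every nonempty open `U ⊆ ∂I`. -/
theorem harmonic_measure_full_support
    (q : ℝ) (hq0 : 0 < q) (hq1 : q < 1)
    (μ : Word → ℝ) (hμ0 : ∀ z, 0 ≤ μ z) (hμ1 : HasSum μ 1)
    (hfin : {z : Word | μ z ≠ 0}.Finite)
    (hgen : ∀ x y : Word, ∃ n : ℕ, 1 ≤ n ∧ 0 < pn q μ n x y)
    (P : Word → Measure (ℕ → Word)) (hP : ∀ x, IsProbabilityMeasure (P x))
    (hmarkov : ∀ (x : Word) (w : ℕ → Word), w 0 = x → ∀ n : ℕ,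
      P x {ω | ∀ i ≤ n, ω i = w i} =
        ENNReal.ofReal (∏ i ∈ Finset.range n, pker q μ (w i) (w (i + 1))))
    (bnd : (ℕ → Word) → (ℕ → Bool)) (hbnd_meas : Measurable bnd)
    (hbnd : ∀ x : Word, ∀ᵐ ω ∂(P x),
      Tendsto (fun n => (ω n).length) atTop atTop ∧
      ∀ m : ℕ, ∀ᶠ n in atTop, (ω n).take m = bprefix (bnd ω) m)
    (ν : Word → Measure (ℕ → Bool)) (hν : ∀ x, ν x = (P x).map bnd)
    :
    ∀ U : Set (ℕ → Bool), IsOpen U → U.Nonempty → 0 < ν [] U := by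
  intro U hU hUne
  classical
  obtain ⟨ws, hws⟩ := hUne
  obtain ⟨I, o, ho, hIU⟩ := isOpen_pi_iff.1 hU ws hws
  set m := I.sup id + 1 with hm
  set x : Word := bprefix ws m with hx
  have hxlen : x.length = m := by simp [hx, bprefix]
  set Cs := {u : ℕ → Bool | ∀ i < m, u i = ws i} with hCs
  have hcylU : Cs ⊆ U := by
    intro u hu
    apply hIU
    rw [Set.mem_pi]
    intro i hi
    have hilt : i < m := by
      have := Finset.le_sup (f := id) hi
      simp only [id] at this
      omega
    rw [hu i hilt]
    exact (ho i hi).2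
  set L := hfin.toFinset.sup (fun z : Word => z.length) with hLdef
  have hL : ∀ z', μ z' ≠ 0 → z'.length ≤ L := fun z' h =>
    Finset.le_sup (f := fun z : Word => z.length) (hfin.mem_toFinset.2 h)
  set NN := {ω : ℕ → Word | ¬ (Tendsto (fun n => (ω n).length) atTop atTop ∧
      ∀ m' : ℕ, ∀ᶠ n in atTop, (ω n).take m' = bprefix (bnd ω) m')} with hNN
  have hNN0 : P [] NN = 0 := MeasureTheory.ae_iff.1 (hbnd [])
  haveI := hP ([] : Word)
  -- step A : some shifted Gset has positive measure
  have hsubU : NNᶜ ⊆ ⋃ (z : Word) (N : ℕ), shiftk N ⁻¹' Gset m (m + L) z := by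
    intro ω hω
    rw [Set.mem_compl_iff, hNN] at hω
    simp only [Set.mem_setOf_eq, not_not] at hω
    obtain ⟨hlenω, hstabω⟩ := hω
    obtain ⟨N₁, hN₁⟩ := eventually_atTop.1 (hlenω.eventually_ge_atTop (m + L + 1))
    obtain ⟨N₂, hN₂⟩ := eventually_atTop.1 (hstabω m)
    refine Set.mem_iUnion.2 ⟨bprefix (bnd ω) m, Set.mem_iUnion.2 ⟨max N₁ N₂, ?_⟩⟩
    intro n
    refine ⟨?_, ?_⟩
    · show (ω (max N₁ N₂ + n)).take m = bprefix (bnd ω) m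
      exact hN₂ (max N₁ N₂ + n) (by omega)
    · show m + L < (ω (max N₁ N₂ + n)).length
      have := hN₁ (max N₁ N₂ + n) (by omega)
      omega
  obtain ⟨z₀, N₀, hz₀pos⟩ : ∃ z₀ N₀, P [] (shiftk N₀ ⁻¹' Gset m (m + L) z₀) ≠ 0 := by
    by_contra hc
    push_neg at hc
    have hun : P [] (⋃ (z : Word) (N : ℕ), shiftk N ⁻¹' Gset m (m + L) z) = 0 :=
      measure_iUnion_null fun z => measure_iUnion_null fun N => hc z N
    have h1 : P [] Set.univ ≤ P [] (⋃ (z : Word) (N : ℕ), shiftk N ⁻¹' Gset m (m + L) z) + P [] NN := by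
      refine le_trans (measure_mono ?_) (measure_union_le _ _)
      intro ω _
      by_cases hωN : ω ∈ NN
      · exact Or.inr hωN
      · exact Or.inl (hsubU hωN)
    rw [hun, hNN0, add_zero, measure_univ] at h1
    exact absurd h1 (by simp)
  -- step B : extract a starting word u₀ with positive Gset measure
  have hGmeas := measurableSet_Gset m (m + L) z₀
  have hdec : ∃ v : Fin N₀ → Word,
      P [] (cylSet N₀ (pw [] N₀ v) ∩ shiftk N₀ ⁻¹' Gset m (m + L) z₀) ≠ 0 := by
    by_contra hc
    push_neg at hc
    apply hz₀pos
    refine le_antisymm ?_ zero_le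
    have hsub2 : shiftk N₀ ⁻¹' Gset m (m + L) z₀ ⊆
        (⋃ v : Fin N₀ → Word, (cylSet N₀ (pw [] N₀ v) ∩ shiftk N₀ ⁻¹' Gset m (m + L) z₀)) ∪
          {ω : ℕ → Word | ω 0 ≠ []} := by
      intro ω hω
      by_cases h0 : ω 0 = ([] : Word)
      · left
        refine Set.mem_iUnion.2 ⟨fun j : Fin N₀ => ω (j.1 + 1), ⟨?_, hω⟩⟩
        intro i hi
        by_cases hi1 : 1 ≤ i ∧ i ≤ N₀
        · have h2 : pw [] N₀ (fun j : Fin N₀ => ω (j.1 + 1)) i = ω (i - 1 + 1) := dif_pos hi1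
          rw [h2]
          congr 1
          omega
        · have h2 : pw [] N₀ (fun j : Fin N₀ => ω (j.1 + 1)) i = [] := dif_neg hi1
          have hi0 : i = 0 := by omega
          rw [h2, hi0, h0]
      · right; exact h0
    have hts : ∑' v : Fin N₀ → Word,
        P [] (cylSet N₀ (pw [] N₀ v) ∩ shiftk N₀ ⁻¹' Gset m (m + L) z₀) = 0 := by
      simp only [hc]
      exact tsum_zero
    calc P [] (shiftk N₀ ⁻¹' Gset m (m + L) z₀)
        ≤ P [] ((⋃ v : Fin N₀ → Word, (cylSet N₀ (pw [] N₀ v) ∩ shiftk N₀ ⁻¹' Gset m (m + L) z₀)) ∪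
            {ω : ℕ → Word | ω 0 ≠ []}) := measure_mono hsub2
      _ ≤ P [] (⋃ v : Fin N₀ → Word, (cylSet N₀ (pw [] N₀ v) ∩ shiftk N₀ ⁻¹' Gset m (m + L) z₀)) +
            P [] {ω : ℕ → Word | ω 0 ≠ []} := measure_union_le _ _
      _ ≤ (∑' v : Fin N₀ → Word,
            P [] (cylSet N₀ (pw [] N₀ v) ∩ shiftk N₀ ⁻¹' Gset m (m + L) z₀)) +
            P [] {ω : ℕ → Word | ω 0 ≠ []} := by
            exact add_le_add_left (measure_iUnion_le _) _
      _ = 0 := by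
            rw [hts, prob_zero_ne_start P hP hmarkov ([] : Word), add_zero]
  obtain ⟨v₀, hv₀⟩ := hdec
  have hmk := markov_lemma P hP hmarkov (pker_nonneg hq0 hq1 μ hμ0) [] N₀ (pw [] N₀ v₀)
    (pw_zero _ _ _) (Gset m (m + L) z₀) hGmeas
  rw [hmk] at hv₀
  set u₀ := pw [] N₀ v₀ N₀ with hu₀def
  have hδpos : P u₀ (Gset m (m + L) z₀) ≠ 0 := by
    intro h
    rw [h, mul_zero] at hv₀
    exact hv₀ rfl
  haveI := hP u₀
  have hu₀S : u₀ ∈ Sset m (m + L) z₀ := by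
    by_contra hns
    apply hδpos
    have hsub3 : Gset m (m + L) z₀ ⊆ {ω : ℕ → Word | ω 0 ≠ u₀} := by
      intro ω hω h0
      exact hns (h0 ▸ hω 0)
    exact le_antisymm (le_trans (measure_mono hsub3)
      (le_of_eq (prob_zero_ne_start P hP hmarkov u₀))) zero_le
  obtain ⟨htake, hlenu₀⟩ := hu₀S
  have hz₀len : z₀.length = m := by
    rw [← htake, List.length_take]
    omega
  set t := u₀.drop m with ht
  have hu₀eq : z₀ ++ t = u₀ := by
    rw [← htake, ht]
    exact List.take_append_drop m u₀
  have htL : L < t.length := by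
    rw [ht, List.length_drop]
    omega
  -- step C : stay bound and limit
  set c₁ := ENNReal.ofReal ((rlo q ^ m / rhi q ^ m) ^ 2) with hc₁
  have hc₁ne : c₁ ≠ 0 := by
    rw [hc₁]
    have h1 := rlo_pos hq0 hq1
    have h2 := rhi_pos hq0 hq1
    exact (ENNReal.ofReal_pos.2 (by positivity)).ne'
  have hstay : ∀ N, c₁ * P u₀ (Gset m (m + L) z₀) ≤ P (x ++ t) (staySet m (m + L) x N) := by
    intro N
    have := stay_bound hq0 hq1 μ hμ0 hfin hL P hP hmarkov x z₀ t hxlen hz₀len htL N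
    rwa [hu₀eq] at this
  have hGx : c₁ * P u₀ (Gset m (m + L) z₀) ≤ P (x ++ t) (Gset m (m + L) x) := by
    rw [Gset_eq_iInter m (m + L) x]
    have htend := MeasureTheory.tendsto_measure_iInter_atTop (μ := P (x ++ t))
      (fun N => (measurableSet_staySet m (m + L) x N).nullMeasurableSet)
      (staySet_antitone m (m + L) x) ⟨0, measure_ne_top _ _⟩
    exact ge_of_tendsto htend (Filter.Eventually.of_forall hstay)
  have hGxpos : P (x ++ t) (Gset m (m + L) x) ≠ 0 := by
    intro h
    rw [h] at hGx
    have h0 : c₁ * P u₀ (Gset m (m + L) z₀) = 0 := le_antisymm hGx zero_le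
    rcases mul_eq_zero.1 h0 with h1 | h1
    · exact hc₁ne h1
    · exact hδpos h1
  -- step D : seed path from [] to x ++ t
  obtain ⟨n₀, hn₀1, hn₀pos⟩ := hgen [] (x ++ t)
  obtain ⟨pp, hpp0, hppn, hppos⟩ := pn_path hq0 hq1 μ hμ0 n₀ hn₀1 [] (x ++ t) hn₀pos
  have hmk2 := markov_lemma P hP hmarkov (pker_nonneg hq0 hq1 μ hμ0) [] n₀ pp hpp0
    (Gset m (m + L) x) (measurableSet_Gset m (m + L) x)
  rw [hppn] at hmk2
  set E := cylSet n₀ pp ∩ shiftk n₀ ⁻¹' Gset m (m + L) x with hE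
  have hEpos : P [] E ≠ 0 := by
    rw [hE, hmk2]
    exact mul_ne_zero (ENNReal.ofReal_pos.2 hppos).ne' hGxpos
  -- step E : inclusion into bnd ⁻¹' Cs
  have hCmeas : MeasurableSet Cs := by
    have he : Cs = ⋂ i ∈ Set.Iio m, (fun u : ℕ → Bool => u i) ⁻¹' {ws i} := by
      ext u; simp [hCs]
    rw [he]
    exact MeasurableSet.biInter (Set.to_countable _) fun i _ =>
      (measurable_pi_apply i) (measurableSet_singleton _)
  have hsubE : E ∩ NNᶜ ⊆ bnd ⁻¹' Cs := by
    rintro ω ⟨hωE, hωN⟩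
    rw [Set.mem_compl_iff, hNN] at hωN
    simp only [Set.mem_setOf_eq, not_not] at hωN
    obtain ⟨hlenω, hstabω⟩ := hωN
    obtain ⟨hcylω, hshiftω⟩ := hωE
    obtain ⟨N₂, hN₂⟩ := eventually_atTop.1 (hstabω m)
    set n := max N₂ n₀ with hn
    have h1 : (ω n).take m = bprefix (bnd ω) m := hN₂ n (le_max_left _ _)
    have h2 : ω n ∈ Sset m (m + L) x := by
      have hh := hshiftω (n - n₀)
      simp only [shiftk] at hh
      rwa [show n₀ + (n - n₀) = n from by omega] at hh
    have h3 : bprefix (bnd ω) m = x := by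
      rw [← h1]
      exact h2.1
    intro i hi
    exact bprefix_eq_imp (h3.trans hx) i hi
  -- step F : conclusion
  have hchain : P [] E ≤ ν [] U := by
    calc P [] E ≤ P [] ((E ∩ NNᶜ) ∪ NN) := by
          apply measure_mono
          intro ω hω
          by_cases hωN : ω ∈ NN
          · exact Or.inr hωN
          · exact Or.inl ⟨hω, hωN⟩
      _ ≤ P [] (E ∩ NNᶜ) + P [] NN := measure_union_le _ _
      _ = P [] (E ∩ NNᶜ) := by rw [hNN0, add_zero]
      _ ≤ P [] (bnd ⁻¹' Cs) := measure_mono hsubE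
      _ = ν [] Cs := by rw [hν [], Measure.map_apply hbnd_meas hCmeas]
      _ ≤ ν [] U := measure_mono hcylU
  exact lt_of_lt_of_le (pos_iff_ne_zero.2 hEpos) hchain
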